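/- Let p, r, r1, r2 be real numbers with p > 2 and 1 ≤ r2 < r1 < r, and define F : ℝ → ℝ by F(z) = |z|^(r2−1)·z − |z|^(r1−1)·z. Then there do NOT exist constants α > 0 and β > 0 such that F(z)·|z|^(p·r−r−1)·z ≤ α·(1 + |z|^(p·r−1)) − β·|z|^(p·r) for all z ∈ ℝ. -/

import Mathlib

/-- Example 3.1: the nonlinearity F(z) = |z|^{r2−1} z − |z|^{r1−1} z, with
1 ≤ r2 < r1 < r and p > 2, does NOT satisfy the assumption (M4) of
Moroşanu–Motreanu: there are no constants α, β > 0 with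
F(z)·|z|^{pr−r−1}·z ≤ α(1 + |z|^{pr−1}) − β|z|^{pr} for all z. -/
theorem example_fails_M4
    (p r r1 r2 : ℝ) (hp : 2 < p) (h1 : 1 ≤ r2) (h2 : r2 < r1) (h3 : r1 < r)
    (F : ℝ → ℝ) (hF : ∀ z : ℝ, F z = |z| ^ (r2 - 1) * z - |z| ^ (r1 - 1) * z) :
    ¬ ∃ α β : ℝ, 0 < α ∧ 0 < β ∧ ∀ z : ℝ,
      F z * |z| ^ (p * r - r - 1) * z ≤
        α * (1 + |z| ^ (p * r - 1)) - β * |z| ^ (p * r) := by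
  rintro ⟨α, β, hα, hβ, h⟩
  set δ : ℝ := min 1 (r - r1) with hδdef
  have hδpos : 0 < δ := lt_min one_pos (by linarith)
  have hδ1 : δ ≤ 1 := min_le_left _ _
  have hδ2 : δ ≤ r - r1 := min_le_right _ _
  set c : ℝ := (2 * α + 1) / β with hcdef
  have hc0 : 0 ≤ c := by positivity
  set z : ℝ := max 1 (c ^ δ⁻¹) + 1 with hzdef
  have hz1 : 1 < z := by
    have : (1 : ℝ) ≤ max 1 (c ^ δ⁻¹) := le_max_left _ _
    rw [hzdef]; linarith
  have hz0 : 0 < z := by linarith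
  have hzc : c ^ δ⁻¹ < z := by
    have : c ^ δ⁻¹ ≤ max 1 (c ^ δ⁻¹) := le_max_right _ _
    rw [hzdef]; linarith
  -- z ^ δ > c
  have hzd : c < z ^ δ := by
    have h1' : (c ^ δ⁻¹) ^ δ < z ^ δ :=
      Real.rpow_lt_rpow (Real.rpow_nonneg hc0 _) hzc hδpos
    have h2' : (c ^ δ⁻¹) ^ δ = c := by
      rw [← Real.rpow_mul hc0, inv_mul_cancel₀ hδpos.ne', Real.rpow_one]
    linarith
  -- abbreviation for exponents
  have habs : |z| = z := abs_of_pos hz0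
  -- rewrite the LHS of the assumed inequality at z
  have hkey : F z * |z| ^ (p * r - r - 1) * z
      = z ^ (p * r - r + r2) - z ^ (p * r - r + r1) := by
    rw [hF, habs]
    have e1 : z ^ (p * r - r + r2)
        = z ^ (r2 - 1) * z * (z ^ (p * r - r - 1) * z) := by
      rw [show p * r - r + r2 = (r2 - 1) + 1 + ((p * r - r - 1) + 1) by ring,
        Real.rpow_add hz0, Real.rpow_add hz0, Real.rpow_add hz0, Real.rpow_one]
      try ring
    have e2 : z ^ (p * r - r + r1)
        = z ^ (r1 - 1) * z * (z ^ (p * r - r - 1) * z) := by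
      rw [show p * r - r + r1 = (r1 - 1) + 1 + ((p * r - r - 1) + 1) by ring,
        Real.rpow_add hz0, Real.rpow_add hz0, Real.rpow_add hz0, Real.rpow_one]
      try ring
    rw [e1, e2]; ring
  have hineq := h z
  rw [hkey, habs] at hineq
  -- the dominant bound: set m = p*r - δ
  set m : ℝ := p * r - δ with hmdef
  have hr1 : 1 < r := by linarith
  have hprm : 0 ≤ m := by nlinarith
  have hb1 : z ^ (p * r - 1) ≤ z ^ m :=
    Real.rpow_le_rpow_of_exponent_le hz1.le (by simp [hmdef]; linarith)
  have hb2 : z ^ (p * r - r + r1) ≤ z ^ m :=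
    Real.rpow_le_rpow_of_exponent_le hz1.le (by simp [hmdef]; linarith)
  have hb3 : (1 : ℝ) ≤ z ^ m := Real.one_le_rpow hz1.le hprm
  have hb4 : 0 < z ^ m := Real.rpow_pos_of_pos hz0 _
  have hb5 : 0 ≤ z ^ (p * r - r + r2) := (Real.rpow_pos_of_pos hz0 _).le
  -- split z^(pr) = z^δ * z^m
  have hsplit : z ^ (p * r) = z ^ δ * z ^ m := by
    rw [← Real.rpow_add hz0, hmdef]; ring_nf
  -- β * z^δ > 2α + 1
  have hbz : 2 * α + 1 < β * z ^ δ := by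
    have : β * c < β * z ^ δ := by exact (mul_lt_mul_iff_right₀ hβ).mpr hzd
    rw [hcdef] at this
    rw [mul_div_cancel₀ _ hβ.ne'] at this
    exact this
  -- contradiction
  rw [hsplit] at hineq
  nlinarith [mul_le_mul_of_nonneg_left hb1 hα.le, mul_lt_mul_of_pos_right hbz hb4]
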